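/- Let μ_P and μ_N be probability measures on ℝ each supported in [0,1]. Then ∫∫ (1 − (x − y))² d(μ_P ⊗ μ_N)(x, y) = min_{(a,b) ∈ [0,1]²} max_{γ ∈ [−1,1]} [ 1 + ∫ (x − a)² dμ_P − 2(1+γ)∫ x dμ_P + ∫ (y − b)² dμ_N + 2(1+γ)∫ y dμ_N − γ² ], i.e. the pairwise partial-AUC surrogate objective for a fixed scoring function equals, up to the additive constant 1, the min-max value of the instance-wise objective; the optimum is attained at a* = ∫ x dμ_P, b* = ∫ y dμ_N, γ* = b* − a*. -/

import Mathlib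

open MeasureTheory

lemma ae_mem_of_eq_one {α : Type*} [MeasurableSpace α] (μ : Measure α) [IsProbabilityMeasure μ]
    {s : Set α} (hs : MeasurableSet s) (h : μ s = 1) : ∀ᵐ x ∂μ, x ∈ s := by
  have hc : μ sᶜ = 0 := by
    rw [measure_compl hs (measure_ne_top _ _), h, measure_univ, tsub_self]
  exact ae_iff.2 hc

lemma int_id (μ : Measure ℝ) [IsProbabilityMeasure μ] (h : μ (Set.Icc 0 1) = 1) :
    Integrable (fun x : ℝ => x) μ := by
  refine Integrable.mono' (integrable_const 1) measurable_id.aestronglyMeasurable ?_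
  filter_upwards [ae_mem_of_eq_one μ measurableSet_Icc h] with x hx
  rw [Real.norm_eq_abs, abs_le]
  exact ⟨by linarith [hx.1], hx.2⟩

lemma int_sq (μ : Measure ℝ) [IsProbabilityMeasure μ] (h : μ (Set.Icc 0 1) = 1) :
    Integrable (fun x : ℝ => x ^ 2) μ := by
  refine Integrable.mono' (integrable_const 1) (measurable_id.pow_const 2).aestronglyMeasurable ?_
  filter_upwards [ae_mem_of_eq_one μ measurableSet_Icc h] with x hx
  rw [Real.norm_eq_abs, abs_le]
  constructor <;> nlinarith [hx.1, hx.2]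

lemma sq_shift (μ : Measure ℝ) [IsProbabilityMeasure μ] (h : μ (Set.Icc 0 1) = 1) (a : ℝ) :
    ∫ x, (x - a) ^ 2 ∂μ = (∫ x, x ^ 2 ∂μ) - 2 * a * (∫ x, x ∂μ) + a ^ 2 := by
  have I1 := int_id μ h
  have I2 := int_sq μ h
  have he : ∀ x : ℝ, (x - a) ^ 2 = x ^ 2 - (2 * a) * x + a ^ 2 := fun x => by ring
  simp_rw [he]
  have Im : Integrable (fun x : ℝ => 2 * a * x) μ := I1.const_mul _
  have Ii : Integrable (fun x : ℝ => x ^ 2 - 2 * a * x) μ := I2.sub Im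
  rw [integral_add Ii (integrable_const _), integral_sub I2 Im, integral_const_mul,
      integral_const]
  simp

lemma mean_mem (μ : Measure ℝ) [IsProbabilityMeasure μ] (h : μ (Set.Icc 0 1) = 1) :
    (∫ x, x ∂μ) ∈ Set.Icc (0 : ℝ) 1 := by
  constructor
  · exact integral_nonneg_of_ae ((ae_mem_of_eq_one μ measurableSet_Icc h).mono fun x hx => hx.1)
  · have : ∫ x, x ∂μ ≤ ∫ _, (1 : ℝ) ∂μ :=
      integral_mono_ae (int_id μ h) (integrable_const 1)
        ((ae_mem_of_eq_one μ measurableSet_Icc h).mono fun x hx => hx.2)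
    simpa using this

lemma sup_quad (C g : ℝ) (hg : g ∈ Set.Icc (-1 : ℝ) 1) :
    (⨆ γ : Set.Icc (-1 : ℝ) 1, (C + 2 * (γ : ℝ) * g - (γ : ℝ) ^ 2)) = C + g ^ 2 := by
  haveI : Nonempty (Set.Icc (-1 : ℝ) 1) := ⟨⟨0, by norm_num⟩⟩
  apply le_antisymm
  · exact ciSup_le fun γ => by nlinarith [sq_nonneg ((γ : ℝ) - g)]
  · have hb : BddAbove (Set.range fun γ : Set.Icc (-1 : ℝ) 1 =>
        (C + 2 * (γ : ℝ) * g - (γ : ℝ) ^ 2)) :=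
      ⟨C + g ^ 2, by rintro _ ⟨γ, rfl⟩; beta_reduce; nlinarith [sq_nonneg ((γ : ℝ) - g)]⟩
    have hle := le_ciSup hb (⟨g, hg⟩ : Set.Icc (-1 : ℝ) 1)
    calc C + g ^ 2
        = C + 2 * ((⟨g, hg⟩ : Set.Icc (-1 : ℝ) 1) : ℝ) * g
          - ((⟨g, hg⟩ : Set.Icc (-1 : ℝ) 1) : ℝ) ^ 2 := by
          show C + g ^ 2 = C + 2 * g * g - g ^ 2; ring
      _ ≤ _ := hle

lemma inf_quad (R p q : ℝ) (hp : p ∈ Set.Icc (0 : ℝ) 1) (hq : q ∈ Set.Icc (0 : ℝ) 1) :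
    (⨅ a : Set.Icc (0 : ℝ) 1, ⨅ b : Set.Icc (0 : ℝ) 1,
      (R + ((a : ℝ) - p) ^ 2 + ((b : ℝ) - q) ^ 2)) = R := by
  haveI : Nonempty (Set.Icc (0 : ℝ) 1) := ⟨⟨0, by norm_num⟩⟩
  have hinner : ∀ a : Set.Icc (0 : ℝ) 1,
      (⨅ b : Set.Icc (0 : ℝ) 1, (R + ((a : ℝ) - p) ^ 2 + ((b : ℝ) - q) ^ 2))
        = R + ((a : ℝ) - p) ^ 2 := by
    intro a
    apply le_antisymm
    · have hle := ciInf_le (f := fun b : Set.Icc (0 : ℝ) 1 =>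
          (R + ((a : ℝ) - p) ^ 2 + ((b : ℝ) - q) ^ 2))
        ⟨R + ((a : ℝ) - p) ^ 2, by rintro _ ⟨b, rfl⟩; beta_reduce; nlinarith [sq_nonneg ((b : ℝ) - q)]⟩
        (⟨q, hq⟩ : Set.Icc (0 : ℝ) 1)
      calc _ ≤ _ := hle
        _ = R + ((a : ℝ) - p) ^ 2 := by
          show R + ((a : ℝ) - p) ^ 2 + (q - q) ^ 2 = _; ring
    · exact le_ciInf fun b => by nlinarith [sq_nonneg ((b : ℝ) - q)]
  simp_rw [hinner]
  apply le_antisymm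
  · have hle := ciInf_le (f := fun a : Set.Icc (0 : ℝ) 1 => (R + ((a : ℝ) - p) ^ 2))
      ⟨R, by rintro _ ⟨a, rfl⟩; beta_reduce; nlinarith [sq_nonneg ((a : ℝ) - p)]⟩
      (⟨p, hp⟩ : Set.Icc (0 : ℝ) 1)
    calc _ ≤ _ := hle
      _ = R := by show R + (p - p) ^ 2 = R; ring
  · exact le_ciInf fun a => by nlinarith [sq_nonneg ((a : ℝ) - p)]

/-- Instance-wise min-max reformulation of the pairwise squared surrogate loss:
`∫∫ (1 − (x − y))² d(μP ⊗ μN)` equals the min over `(a,b) ∈ [0,1]²` of the max over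
`γ ∈ [−1,1]` of the instance-wise objective, the optimum being attained at
`a* = ∫ x dμP`, `b* = ∫ y dμN`, `γ* = b* − a*`. -/
theorem stmt_12 (μP μN : Measure ℝ) [IsProbabilityMeasure μP] [IsProbabilityMeasure μN]
    (hP : μP (Set.Icc 0 1) = 1) (hN : μN (Set.Icc 0 1) = 1) :
    ((∫ z : ℝ × ℝ, (1 - (z.1 - z.2)) ^ 2 ∂(μP.prod μN)) =
      ⨅ a : Set.Icc (0 : ℝ) 1, ⨅ b : Set.Icc (0 : ℝ) 1, ⨆ γ : Set.Icc (-1 : ℝ) 1,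
        (1 + (∫ x, (x - (a : ℝ)) ^ 2 ∂μP) - 2 * (1 + (γ : ℝ)) * (∫ x, x ∂μP)
          + (∫ y, (y - (b : ℝ)) ^ 2 ∂μN) + 2 * (1 + (γ : ℝ)) * (∫ y, y ∂μN)
          - (γ : ℝ) ^ 2)) ∧
    ((∫ x, x ∂μP) ∈ Set.Icc (0 : ℝ) 1) ∧
    ((∫ y, y ∂μN) ∈ Set.Icc (0 : ℝ) 1) ∧
    (((∫ y, y ∂μN) - (∫ x, x ∂μP)) ∈ Set.Icc (-1 : ℝ) 1) ∧
    ((∫ z : ℝ × ℝ, (1 - (z.1 - z.2)) ^ 2 ∂(μP.prod μN)) =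
      1 + (∫ x, (x - (∫ x', x' ∂μP)) ^ 2 ∂μP)
        - 2 * (1 + ((∫ y, y ∂μN) - (∫ x, x ∂μP))) * (∫ x, x ∂μP)
        + (∫ y, (y - (∫ y', y' ∂μN)) ^ 2 ∂μN)
        + 2 * (1 + ((∫ y, y ∂μN) - (∫ x, x ∂μP))) * (∫ y, y ∂μN)
        - ((∫ y, y ∂μN) - (∫ x, x ∂μP)) ^ 2) := by
  have hmPm := mean_mem μP hP
  have hmNm := mean_mem μN hN
  have hprod1 : (μP.prod μN) (Set.Icc (0 : ℝ) 1 ×ˢ Set.Icc (0 : ℝ) 1) = 1 := by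
    rw [Measure.prod_prod, hP, hN, one_mul]
  have hintprod : Integrable (fun z : ℝ × ℝ => (1 - (z.1 - z.2)) ^ 2) (μP.prod μN) := by
    refine Integrable.mono' (integrable_const 4)
      ((continuous_const.sub (continuous_fst.sub continuous_snd)).pow 2).aestronglyMeasurable ?_
    filter_upwards [ae_mem_of_eq_one _ (measurableSet_Icc.prod measurableSet_Icc) hprod1]
      with z hz
    simp only [Set.mem_prod, Set.mem_Icc] at hz
    rw [Real.norm_eq_abs, abs_of_nonneg (sq_nonneg _)]
    nlinarith [hz.1.1, hz.1.2, hz.2.1, hz.2.2]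
  have hdouble : (∫ z : ℝ × ℝ, (1 - (z.1 - z.2)) ^ 2 ∂(μP.prod μN))
      = 1 - 2 * (∫ x, x ∂μP) + (∫ x, x ^ 2 ∂μP) + 2 * (∫ y, y ∂μN)
        - 2 * (∫ y, y ∂μN) * (∫ x, x ∂μP) + (∫ y, y ^ 2 ∂μN) := by
    rw [integral_prod _ hintprod]
    have hinner : ∀ x : ℝ, (∫ y, (1 - (x - y)) ^ 2 ∂μN)
        = x ^ 2 + (-2 - 2 * (∫ y, y ∂μN)) * x
          + ((∫ y, y ^ 2 ∂μN) + 2 * (∫ y, y ∂μN) + 1) := by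
      intro x
      have he : ∀ y : ℝ, (1 - (x - y)) ^ 2 = (y - (x - 1)) ^ 2 := fun y => by ring
      simp_rw [he, sq_shift μN hN (x - 1)]
      ring
    simp_rw [hinner]
    have I1 := int_id μP hP
    have I2 := int_sq μP hP
    have Im : Integrable (fun x : ℝ => (-2 - 2 * (∫ y, y ∂μN)) * x) μP := I1.const_mul _
    have Ii : Integrable (fun x : ℝ => x ^ 2 + (-2 - 2 * (∫ y, y ∂μN)) * x) μP := I2.add Im
    rw [integral_add Ii (integrable_const _), integral_add I2 Im, integral_const_mul,
        integral_const]
    simp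
    ring
  have hg : ((∫ y, y ∂μN) - (∫ x, x ∂μP)) ∈ Set.Icc (-1 : ℝ) 1 :=
    ⟨by linarith [hmPm.2, hmNm.1], by linarith [hmPm.1, hmNm.2]⟩
  refine ⟨?_, hmPm, hmNm, hg, ?_⟩
  · rw [hdouble]
    have hsup : ∀ a b : Set.Icc (0 : ℝ) 1,
        (⨆ γ : Set.Icc (-1 : ℝ) 1,
          (1 + (∫ x, (x - (a : ℝ)) ^ 2 ∂μP) - 2 * (1 + (γ : ℝ)) * (∫ x, x ∂μP)
            + (∫ y, (y - (b : ℝ)) ^ 2 ∂μN) + 2 * (1 + (γ : ℝ)) * (∫ y, y ∂μN)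
            - (γ : ℝ) ^ 2))
        = (1 - 2 * (∫ x, x ∂μP) + (∫ x, x ^ 2 ∂μP) + 2 * (∫ y, y ∂μN)
            - 2 * (∫ y, y ∂μN) * (∫ x, x ∂μP) + (∫ y, y ^ 2 ∂μN))
          + ((a : ℝ) - (∫ x, x ∂μP)) ^ 2 + ((b : ℝ) - (∫ y, y ∂μN)) ^ 2 := by
      intro a b
      calc (⨆ γ : Set.Icc (-1 : ℝ) 1,
          (1 + (∫ x, (x - (a : ℝ)) ^ 2 ∂μP) - 2 * (1 + (γ : ℝ)) * (∫ x, x ∂μP)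
            + (∫ y, (y - (b : ℝ)) ^ 2 ∂μN) + 2 * (1 + (γ : ℝ)) * (∫ y, y ∂μN)
            - (γ : ℝ) ^ 2))
          = ⨆ γ : Set.Icc (-1 : ℝ) 1,
            ((1 + (∫ x, (x - (a : ℝ)) ^ 2 ∂μP) - 2 * (∫ x, x ∂μP)
              + (∫ y, (y - (b : ℝ)) ^ 2 ∂μN) + 2 * (∫ y, y ∂μN))
              + 2 * (γ : ℝ) * ((∫ y, y ∂μN) - (∫ x, x ∂μP)) - (γ : ℝ) ^ 2) :=
          iSup_congr fun γ => by ring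
        _ = _ := by
          rw [sup_quad _ _ hg, sq_shift μP hP, sq_shift μN hN]; ring
    rw [iInf_congr fun a => iInf_congr fun b => hsup a b,
        inf_quad _ _ _ hmPm hmNm]
  · rw [hdouble, sq_shift μP hP, sq_shift μN hN]
    ring
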